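/- Let (ν_t)_{t≥0} be any play distribution consistent with the memory-one strategy (σ_X^0, σ_X) of player X in the randomly-alternating game with move probability ω_X. Then for every measurable set E ⊆ S_X, the series ∑_{t=0}^∞ λ^t ∫_{S_X ⊔ S_Y} [1_E(s) − λ ω_X · σ_X[s](E)] dν_t(s) converges and equals ω_X σ_X^0(E), where 1_E is the indicator of the subset of S_X ⊔ S_Y corresponding to E ⊆ S_X. -/

import Mathlib

open MeasureTheory

/-- Akin-type lemma for randomly-alternating games: for any play distribution
`ν` consistent with the memory-one strategy `(σX0, σX)` of player `X` (who
moves with probability `ωX` in each round) and any measurable `E ⊆ S_X`, the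
series `∑ λ^t ∫ [1_E(s) − λ ωX σX[s](E)] dν_t` converges to `ωX σX0(E)`. -/
theorem stmt_6
    {SX SY : Type*} [MeasurableSpace SX] [MeasurableSpace SY]
    (lam : ℝ) (hlam0 : 0 < lam) (hlam1 : lam < 1)
    (ωX : ℝ) (hω0 : 0 ≤ ωX) (hω1 : ωX ≤ 1)
    (σX0 : Measure SX) [IsProbabilityMeasure σX0]
    (σX : ProbabilityTheory.Kernel (SX ⊕ SY) SX) [ProbabilityTheory.IsMarkovKernel σX]
    (ν : ℕ → Measure (SX ⊕ SY)) (hν : ∀ t, IsProbabilityMeasure (ν t))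
    (hν0 : ∀ E : Set SX, MeasurableSet E →
      ν 0 (Sum.inl '' E) = ENNReal.ofReal ωX * σX0 E)
    (hνsucc : ∀ (t : ℕ) (E : Set SX), MeasurableSet E →
      ν (t + 1) (Sum.inl '' E) = ENNReal.ofReal ωX * ∫⁻ s, σX s E ∂(ν t))
    (E : Set SX) (hE : MeasurableSet E) :
    HasSum
      (fun t : ℕ => lam ^ t *
        ∫ s, ((Sum.inl '' E : Set (SX ⊕ SY)).indicator (fun _ => (1 : ℝ)) s
          - lam * ωX * ((σX s) E).toReal) ∂(ν t))
      (ωX * (σX0 E).toReal) := by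
  have hIm : MeasurableSet (Sum.inl '' E : Set (SX ⊕ SY)) :=
    hE.inl_image
  have hmeas : Measurable fun s : SX ⊕ SY => σX s E := σX.measurable_coe hE
  set a : ℕ → ℝ := fun t => (ν t (Sum.inl '' E)).toReal with ha
  have ha0 : ∀ t, 0 ≤ a t := fun t => ENNReal.toReal_nonneg
  have ha1 : ∀ t, a t ≤ 1 := fun t => by
    haveI := hν t
    exact (ENNReal.toReal_mono ENNReal.one_ne_top prob_le_one).trans_eq ENNReal.toReal_one
  have hLfin : ∀ t, (∫⁻ s, σX s E ∂(ν t)) ≠ ⊤ := by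
    intro t
    haveI := hν t
    refine ne_top_of_le_ne_top ?_ (lintegral_mono (fun s => prob_le_one))
    simp
  have hasucc : ∀ t, a (t + 1) = ωX * (∫⁻ s, σX s E ∂(ν t)).toReal := by
    intro t
    simp only [ha, hνsucc t E hE, ENNReal.toReal_mul, ENNReal.toReal_ofReal hω0]
  have hint : ∀ t, Integrable (fun s => ((σX s) E).toReal) (ν t) := by
    intro t
    haveI := hν t
    refine (integrable_const (1 : ℝ)).mono
      hmeas.ennreal_toReal.aestronglyMeasurable ?_
    refine Filter.Eventually.of_forall fun s => ?_
    rw [Real.norm_eq_abs, abs_of_nonneg ENNReal.toReal_nonneg, norm_one]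
    exact (ENNReal.toReal_mono ENNReal.one_ne_top prob_le_one).trans_eq ENNReal.toReal_one
  have hintegral : ∀ t,
      (∫ s, ((Sum.inl '' E : Set (SX ⊕ SY)).indicator (fun _ => (1 : ℝ)) s
          - lam * ωX * ((σX s) E).toReal) ∂(ν t))
        = a t - lam * ωX * (∫⁻ s, σX s E ∂(ν t)).toReal := by
    intro t
    haveI := hν t
    rw [integral_sub ((integrable_const (1:ℝ)).indicator hIm) ((hint t).const_mul _)]
    rw [integral_indicator_const (1:ℝ) hIm, integral_const_mul,
      integral_toReal hmeas.aemeasurable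
        (Filter.Eventually.of_forall fun s => measure_lt_top _ _)]
    simp [ha, Measure.real]
  set g : ℕ → ℝ := fun t => lam ^ t * a t with hg
  have hfun : (fun t : ℕ => lam ^ t *
        ∫ s, ((Sum.inl '' E : Set (SX ⊕ SY)).indicator (fun _ => (1 : ℝ)) s
          - lam * ωX * ((σX s) E).toReal) ∂(ν t)) = fun t => g t - g (t + 1) := by
    funext t
    rw [hintegral t]
    simp only [hg, hasucc t]
    ring
  have hgsum : Summable g := by
    refine Summable.of_nonneg_of_le (fun t => mul_nonneg (pow_nonneg hlam0.le t) (ha0 t))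
      (fun t => ?_) (summable_geometric_of_lt_one hlam0.le hlam1)
    calc lam ^ t * a t ≤ lam ^ t * 1 :=
          mul_le_mul_of_nonneg_left (ha1 t) (pow_nonneg hlam0.le t)
      _ = lam ^ t := mul_one _
  have hg0 : Filter.Tendsto g Filter.atTop (nhds 0) := by
    refine squeeze_zero (fun t => mul_nonneg (pow_nonneg hlam0.le t) (ha0 t))
      (fun t => ?_) (tendsto_pow_atTop_nhds_zero_of_lt_one hlam0.le hlam1)
    calc lam ^ t * a t ≤ lam ^ t * 1 :=
          mul_le_mul_of_nonneg_left (ha1 t) (pow_nonneg hlam0.le t)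
      _ = lam ^ t := mul_one _
  have hval : g 0 = ωX * (σX0 E).toReal := by
    simp only [hg, pow_zero, one_mul, ha, hν0 E hE, ENNReal.toReal_mul,
      ENNReal.toReal_ofReal hω0]
  rw [hfun, ← hval]
  have hsub : Summable (fun t => g t - g (t + 1)) :=
    hgsum.sub ((summable_nat_add_iff 1).mpr hgsum)
  rw [hsub.hasSum_iff_tendsto_nat]
  have : ∀ n, ∑ i ∈ Finset.range n, (g i - g (i + 1)) = g 0 - g n :=
    fun n => Finset.sum_range_sub' g n
  simp only [this]
  simpa using tendsto_const_nhds.sub hg0
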